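/- Nonexistence for the Tzitzéica equation with positive coefficients: if h₁(x) > 0 and h₂(x) > 0 for all x ∈ V and A, B > 0, then there is no function u : V → ℝ satisfying −Δu(x) + h₁(x)·exp(A·u(x)) + h₂(x)·exp(−B·u(x)) = 0 for all x ∈ V. -/

import Mathlib

open Finset Real

noncomputable def graphLap {V : Type*} [Fintype V] (μ : V → ℝ) (w : V → V → ℝ)
    (u : V → ℝ) (x : V) : ℝ :=
  (1 / μ x) * ∑ y, w x y * (u y - u x)

noncomputable def gradSq {V : Type*} [Fintype V] (μ : V → ℝ) (w : V → V → ℝ)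
    (u : V → ℝ) (x : V) : ℝ :=
  (1 / (2 * μ x)) * ∑ y, w x y * (u y - u x) ^ 2

def GraphConnected {V : Type*} (w : V → V → ℝ) : Prop :=
  ∀ x y : V, Relation.ReflTransGen (fun a b => 0 < w a b) x y

theorem tzitzeica_nonexistence {V : Type*} [Fintype V] [Nonempty V]
    (μ : V → ℝ) (w : V → V → ℝ)
    (hμ : ∀ x, 0 < μ x) (hsym : ∀ x y, w x y = w y x) (hw : ∀ x y, 0 ≤ w x y)
    (h₁ h₂ : V → ℝ) (hh₁ : ∀ x, 0 < h₁ x) (hh₂ : ∀ x, 0 < h₂ x)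
    (A B : ℝ) (hA : 0 < A) (hB : 0 < B) :
    ¬ ∃ u : V → ℝ, ∀ x, -graphLap μ w u x + h₁ x * Real.exp (A * u x)
        + h₂ x * Real.exp (-B * u x) = 0 := by
  rintro ⟨u, hu⟩
  have key : ∑ x, μ x * graphLap μ w u x = 0 := by
    have h1 : ∑ x, μ x * graphLap μ w u x = ∑ x, ∑ y, w x y * (u y - u x) := by
      refine Finset.sum_congr rfl fun x _ => ?_
      have := (hμ x).ne'
      rw [graphLap, ← mul_assoc, mul_one_div_cancel this, one_mul]
    rw [h1]
    have h2 : ∑ x, ∑ y, w x y * (u y - u x)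
        = -∑ x, ∑ y, w x y * (u y - u x) := by
      conv_lhs => rw [Finset.sum_comm]
      rw [← Finset.sum_neg_distrib]
      refine Finset.sum_congr rfl fun x _ => ?_
      rw [← Finset.sum_neg_distrib]
      refine Finset.sum_congr rfl fun y _ => ?_
      rw [hsym y x]; ring
    linarith
  have hpos : 0 < ∑ x, μ x * graphLap μ w u x := by
    refine Finset.sum_pos (fun x _ => ?_) Finset.univ_nonempty
    have hx := hu x
    have : graphLap μ w u x = h₁ x * Real.exp (A * u x) + h₂ x * Real.exp (-B * u x) := by
      linarith
    rw [this]
    exact mul_pos (hμ x) (add_pos (mul_pos (hh₁ x) (Real.exp_pos _)) (mul_pos (hh₂ x) (Real.exp_pos _)))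
  linarith
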